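/- Let $n=6s$, $\mu=4s$, and define for bubbles $W_i$, $i=1,\dots,\kappa$, with $z_i=\lambda_i(x-\xi_i)$, $\tau(z)=(1+|z|^2)^{1/2}$, the weight $S(x)=\sum_{i=1}^\kappa\big[\frac{\lambda_i^{2s}}{\tau(z_i)^{2s}\mathscr{R}^{4s}}\chi_{\{|z_i|\le\mathscr{R}^2\}}+\frac{\lambda_i^{2s}}{\tau(z_i)^{3s}\mathscr{R}^{2s}}\chi_{\{|z_i|>\mathscr{R}^2\}}\big]$ and $T(x)=\sum_{i=1}^\kappa\big[\frac{\lambda_i^{4s}}{\tau(z_i)^{4s}\mathscr{R}^{4s}}\chi_{\{|z_i|\le\mathscr{R}^2\}}+\frac{\lambda_i^{4s}}{\tau(z_i)^{5s}\mathscr{R}^{2s}}\chi_{\{|z_i|>\mathscr{R}^2\}}\big]$. Then $\|S\|_{L^3(\mathbb{R}^{6s})}\lesssim\mathscr{R}^{-4s}(\log\mathscr{R})^{1/3}$ and $\|T\|_{L^{3/2}(\mathbb{R}^{6s})}\lesssim\mathscr{R}^{-4s}(\log\mathscr{R})^{2/3}$ for large $\mathscr{R}$. -/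

import Mathlib

noncomputable section
open MeasureTheory Real Filter
open scoped FourierTransform Topology

namespace NonlocalSobolev

abbrev E (n : ℕ) := EuclideanSpace ℝ (Fin n)

/-- Riesz-type convolution `(|x|^{-μ} ∗ f)(x) = ∫ |x-y|^{-μ} f(y) dy`. -/
def rieszConv (n : ℕ) (μ : ℝ) (f : E n → ℝ) (x : E n) : ℝ :=
  ∫ y : E n, ‖x - y‖ ^ (-μ) * f y

/-- Fourier transform of a real-valued function. -/
def ft (n : ℕ) (u : E n → ℝ) : E n → ℂ :=
  𝓕 (fun x => (u x : ℂ))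

/-- Squared homogeneous Sobolev norm `‖u‖_{Ḣ^s}^2 = ∫ |û(ξ)|^2 |ξ|^{2s} dξ`. -/
def hsNormSq (n : ℕ) (s : ℝ) (u : E n → ℝ) : ℝ :=
  ∫ ξ : E n, ‖ft n u ξ‖ ^ 2 * ‖ξ‖ ^ (2 * s)

/-- Homogeneous Sobolev norm. -/
def hsNorm (n : ℕ) (s : ℝ) (u : E n → ℝ) : ℝ := Real.sqrt (hsNormSq n s u)

/-- The `Ḣ^s` inner product. -/
def hsInner (n : ℕ) (s : ℝ) (u v : E n → ℝ) : ℝ :=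
  ∫ ξ : E n, (ft n u ξ * (starRingEnd ℂ) (ft n v ξ)).re * ‖ξ‖ ^ (2 * s)

/-- The fractional Laplacian `(-Δ)^s u` defined as a Fourier multiplier. -/
def fracLaplacian (n : ℕ) (s : ℝ) (u : E n → ℝ) (x : E n) : ℝ :=
  (𝓕⁻ (fun ξ : E n => ((‖ξ‖ ^ (2 * s) : ℝ) : ℂ) * ft n u ξ) x).re

/-- Membership in `Ḣ^s(ℝⁿ)`: the Fourier-side energy density is integrable. -/
def MemHs (n : ℕ) (s : ℝ) (u : E n → ℝ) : Prop :=
  Integrable (fun ξ : E n => ‖ft n u ξ‖ ^ 2 * ‖ξ‖ ^ (2 * s))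

/-- The dual `Ḣ^{-s}` norm, via duality against the unit ball of `Ḣ^s`. -/
def dualNorm (n : ℕ) (s : ℝ) (f : E n → ℝ) : ℝ :=
  sSup { r | ∃ v : E n → ℝ, MemHs n s v ∧ hsNormSq n s v ≤ 1 ∧ r = ∫ x : E n, f x * v x }

/-- The critical Hartree exponent `p_s = (2n-μ)/(n-2s)`. -/
def pExp (n : ℕ) (s μ : ℝ) : ℝ := (2 * n - μ) / (n - 2 * s)

/-- The critical Sobolev exponent `2_s^* = 2n/(n-2s)`. -/
def twoStar (n : ℕ) (s : ℝ) : ℝ := 2 * n / (n - 2 * s)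

/-- The nonlocal Hartree energy `∫ (|x|^{-μ} ∗ |u|^{p_s}) |u|^{p_s}`. -/
def energy (n : ℕ) (s μ : ℝ) (u : E n → ℝ) : ℝ :=
  ∫ x : E n, rieszConv n μ (fun y => |u y| ^ pExp n s μ) x * |u x| ^ pExp n s μ

/-- The explicit constant `α_{n,μ,s}` in the bubble. -/
def alphaConst (n : ℕ) (s μ : ℝ) : ℝ :=
  ((2 ^ (2 * s) * Real.Gamma ((n + 2 * s) / 2) * Real.Gamma ((2 * n - μ) / 2)) /
      (Real.pi ^ ((n : ℝ) / 2) * Real.Gamma ((n - 2 * s) / 2) * Real.Gamma ((n - μ) / 2))) ^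
    (((n : ℝ) - 2 * s) / (2 * ((n : ℝ) + 2 * s - μ)))

/-- The bubble `W[ξ,λ](x) = α_{n,μ,s} (λ/(1+λ²|x-ξ|²))^{(n-2s)/2}`. -/
def bubble (n : ℕ) (s μ : ℝ) (ξ : E n) (lam : ℝ) (x : E n) : ℝ :=
  alphaConst n s μ * (lam / (1 + lam ^ 2 * ‖x - ξ‖ ^ 2)) ^ (((n : ℝ) - 2 * s) / 2)

/-- `∂_λ W[ξ,λ]`. -/
def bubbleDLam (n : ℕ) (s μ : ℝ) (ξ : E n) (lam : ℝ) (x : E n) : ℝ :=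
  deriv (fun t : ℝ => bubble n s μ ξ t x) lam

/-- `∂_{ξ_j} W[ξ,λ]`. -/
def bubbleDXi (n : ℕ) (s μ : ℝ) (ξ : E n) (lam : ℝ) (j : Fin n) (x : E n) : ℝ :=
  deriv (fun t : ℝ => bubble n s μ (ξ + t • EuclideanSpace.single j (1 : ℝ)) lam x) 0

/-- The interaction quantity `Q_{ij}`. -/
def Qij (n : ℕ) (s : ℝ) (ξi ξj : E n) (li lj : ℝ) : ℝ :=
  (li / lj + lj / li + li * lj * ‖ξi - ξj‖ ^ 2) ^ (-(((n : ℝ) - 2 * s)) / 2)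

/-- `C` is the optimal constant in the nonlocal Sobolev (HLS-type) inequality. -/
def IsOptimalHLS (n : ℕ) (s μ : ℝ) (C : ℝ) : Prop :=
  0 < C ∧
    (∀ u : E n → ℝ, MemHs n s u →
      C * (energy n s μ u) ^ (1 / pExp n s μ) ≤ hsNormSq n s u) ∧
    ∀ C' : ℝ,
      (∀ u : E n → ℝ, MemHs n s u →
        C' * (energy n s μ u) ^ (1 / pExp n s μ) ≤ hsNormSq n s u) → C' ≤ C

open Classical in
/-- The weight `S(x)` (case `n = 6s`, `μ = 4s`), with `z_i = λ_i(x-ξ_i)`,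
`τ(z) = (1+|z|²)^{1/2}`. -/
def weightS (n : ℕ) (s : ℝ) (κ : ℕ) (ξ : Fin κ → E n) (lam : Fin κ → ℝ) (R : ℝ)
    (x : E n) : ℝ :=
  ∑ i : Fin κ,
    if lam i * ‖x - ξ i‖ ≤ R ^ 2 then
      lam i ^ (2 * s) / ((1 + (lam i * ‖x - ξ i‖) ^ 2) ^ s * R ^ (4 * s))
    else
      lam i ^ (2 * s) / ((1 + (lam i * ‖x - ξ i‖) ^ 2) ^ (3 * s / 2) * R ^ (2 * s))

open Classical in
/-- The weight `T(x)` (case `n = 6s`, `μ = 4s`). -/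
def weightT (n : ℕ) (s : ℝ) (κ : ℕ) (ξ : Fin κ → E n) (lam : Fin κ → ℝ) (R : ℝ)
    (x : E n) : ℝ :=
  ∑ i : Fin κ,
    if lam i * ‖x - ξ i‖ ≤ R ^ 2 then
      lam i ^ (4 * s) / ((1 + (lam i * ‖x - ξ i‖) ^ 2) ^ (2 * s) * R ^ (4 * s))
    else
      lam i ^ (4 * s) / ((1 + (lam i * ‖x - ξ i‖) ^ 2) ^ (5 * s / 2) * R ^ (2 * s))


lemma sum_rpow_le_aux {κ : ℕ} (hκ : 0 < κ) (a : Fin κ → ℝ) (ha : ∀ i, 0 ≤ a i)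
    {p : ℝ} (hp : 0 ≤ p) :
    (∑ i, a i) ^ p ≤ (κ : ℝ) ^ p * ∑ i, a i ^ p := by
  have hne : (Finset.univ : Finset (Fin κ)).Nonempty := by
    simpa [Finset.univ_nonempty_iff] using Fin.pos_iff_nonempty.mp hκ
  obtain ⟨i0, -, hi0⟩ := Finset.exists_max_image Finset.univ a hne
  have h1 : ∑ i, a i ≤ (κ : ℝ) * a i0 := by
    calc ∑ i, a i ≤ ∑ _i : Fin κ, a i0 := Finset.sum_le_sum fun i _ => hi0 i (Finset.mem_univ i)
    _ = (κ : ℝ) * a i0 := by simp [Finset.sum_const, nsmul_eq_mul]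
  calc (∑ i, a i) ^ p ≤ ((κ:ℝ) * a i0) ^ p :=
        Real.rpow_le_rpow (Finset.sum_nonneg fun i _ => ha i) h1 hp
    _ = (κ:ℝ)^p * (a i0)^p := Real.mul_rpow (by positivity) (ha i0)
    _ ≤ (κ:ℝ)^p * ∑ i, a i ^ p := by
        gcongr
        exact Finset.single_le_sum (fun i _ => Real.rpow_nonneg (ha i) p) (Finset.mem_univ i0)

lemma piece_eq {lam t R a b c p a' b' c' : ℝ} (hlam : 0 ≤ lam) (hR : 0 < R)
    (ha : a * p = a') (hb : b * p = b') (hc : c * p = c') :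
    (lam ^ a / ((1 + t ^ 2) ^ b * R ^ c)) ^ p
      = lam ^ a' * ((1 + t ^ 2) ^ b' * R ^ c')⁻¹ := by
  have hP : (0:ℝ) < 1 + t ^ 2 := by positivity
  rw [Real.div_rpow (Real.rpow_nonneg hlam a) (by positivity),
    Real.mul_rpow (by positivity) (by positivity),
    ← Real.rpow_mul hlam, ← Real.rpow_mul hP.le, ← Real.rpow_mul hR.le,
    ha, hb, hc, div_eq_mul_inv]



open Classical in
def prof (s B C A R r : ℝ) : ℝ :=
  if r ≤ R ^ 2 then ((1 + r ^ 2) ^ (3 * s) * R ^ A)⁻¹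
  else ((1 + r ^ 2) ^ B * R ^ C)⁻¹

lemma prof_nonneg {s B C A R r : ℝ} (hR : 0 < R) : 0 ≤ prof s B C A R r := by
  unfold prof
  have h1 : (0:ℝ) < 1 + r ^ 2 := by positivity
  split_ifs <;> positivity

lemma prof_measurable (s B C A R : ℝ) (hR : 0 < R) : Measurable (prof s B C A R) := by
  have m1 : ∀ b e : ℝ, Measurable fun r : ℝ => ((1 + r ^ 2) ^ b * R ^ e)⁻¹ := by
    intro b e
    have hc : Continuous fun r : ℝ => (1 + r ^ 2) ^ b :=
      (continuous_const.add (continuous_pow 2)).rpow_const fun r => Or.inl (by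
        have : (0:ℝ) < 1 + r ^ 2 := by positivity
        exact this.ne')
    exact ((hc.mul continuous_const).inv₀ fun r => by
      have : (0:ℝ) < (1 + r ^ 2) ^ b * R ^ e := by positivity
      exact this.ne').measurable
  unfold prof
  exact Measurable.ite (measurableSet_le measurable_id measurable_const) (m1 _ _) (m1 _ _)

lemma prof_core_le {s A R r : ℝ} (hs : 0 ≤ s) (hR : 0 < R) :
    ((1 + r ^ 2) ^ (3 * s) * R ^ A)⁻¹ ≤ R ^ (-A) := by
  rw [Real.rpow_neg hR.le]
  apply inv_anti₀ (Real.rpow_pos_of_pos hR A)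
  exact le_mul_of_one_le_left (Real.rpow_pos_of_pos hR A).le
    (Real.one_le_rpow (by nlinarith [sq_nonneg r]) (by positivity))

lemma prof_tail_le {B C R r : ℝ} (hB : 0 ≤ B) (hR : 0 < R) (hr : 0 ≤ r) :
    ((1 + r ^ 2) ^ B * R ^ C)⁻¹ ≤ R ^ (-C) * (2 ^ B * (1 + r) ^ (-(2*B))) := by
  have h1 : (0:ℝ) < 1 + r ^ 2 := by positivity
  have h2 : (0:ℝ) < 1 + r := by positivity
  have key : ((1 + r) ^ 2 / 2) ^ B ≤ (1 + r ^ 2) ^ B := by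
    apply Real.rpow_le_rpow (by positivity) _ hB
    nlinarith [sq_nonneg (1 - r)]
  have h3 : (1 + r) ^ ((2:ℝ)*B) / 2 ^ B ≤ (1 + r ^ 2) ^ B := by
    rw [Real.rpow_mul h2.le, Real.rpow_two,
      ← Real.div_rpow (by positivity) (by norm_num : (0:ℝ) ≤ 2)]
    exact key
  have h4 : ((1 + r ^ 2) ^ B)⁻¹ ≤ 2 ^ B * ((1 + r) ^ ((2:ℝ)*B))⁻¹ := by
    calc ((1 + r ^ 2) ^ B)⁻¹ ≤ ((1 + r) ^ ((2:ℝ)*B) / 2 ^ B)⁻¹ :=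
          inv_anti₀ (by positivity) h3
      _ = 2 ^ B * ((1 + r) ^ ((2:ℝ)*B))⁻¹ := by rw [inv_div, div_eq_mul_inv]
  calc ((1 + r ^ 2) ^ B * R ^ C)⁻¹ = ((1 + r ^ 2) ^ B)⁻¹ * (R ^ C)⁻¹ := by rw [mul_inv]
    _ ≤ (2 ^ B * ((1 + r) ^ ((2:ℝ)*B))⁻¹) * (R ^ C)⁻¹ :=
        mul_le_mul_of_nonneg_right h4 (by positivity)
    _ = R ^ (-C) * (2 ^ B * (1 + r) ^ (-(2*B))) := by
        rw [Real.rpow_neg hR.le, Real.rpow_neg h2.le]; ring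

-- pointwise bound on the core region
lemma core_pointwise {n : ℕ} {s y : ℝ} (hs : 0 < s) (hn : (n:ℝ) = 6 * s) (hn1 : 1 ≤ n)
    (hy : 0 < y) :
    y ^ (n-1) * ((1 + y ^ 2) ^ (3*s))⁻¹ ≤ Real.sqrt 2 * (1 + y)⁻¹ := by
  have ht : (0:ℝ) < 1 + y ^ 2 := by positivity
  have h2 : (0:ℝ) < 1 + y := by positivity
  have hts : (0:ℝ) < (1 + y ^ 2) ^ (3*s) := Real.rpow_pos_of_pos ht _
  rw [← div_eq_mul_inv, ← div_eq_mul_inv, div_le_div_iff₀ hts h2]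
  -- goal: y ^ (n-1) * (1+y) ≤ √2 * (1+y^2)^(3s)
  have hsqrt : Real.sqrt ((1 + y ^ 2) ^ n) = (1 + y ^ 2) ^ (3*s) := by
    rw [Real.sqrt_eq_rpow, ← Real.rpow_natCast (1 + y^2) n, ← Real.rpow_mul ht.le]
    congr 1
    rw [hn]; ring
  have key : (y ^ (n-1) * (1 + y)) ^ 2 ≤ 2 * (1 + y ^ 2) ^ n := by
    have e1 : (y ^ (n-1) * (1 + y)) ^ 2 = (y^2) ^ (n-1) * (1+y)^2 := by ring
    have e2 : (y^2) ^ (n-1) ≤ (1 + y^2) ^ (n-1) :=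
      pow_le_pow_left₀ (sq_nonneg y) (by linarith) _
    have e3 : (1+y)^2 ≤ 2 * (1 + y^2) := by nlinarith [sq_nonneg (1-y)]
    calc (y ^ (n-1) * (1 + y)) ^ 2 = (y^2) ^ (n-1) * (1+y)^2 := e1
      _ ≤ (1 + y^2) ^ (n-1) * (2 * (1 + y^2)) := by
          apply mul_le_mul e2 e3 (by positivity) (by positivity)
      _ = 2 * ((1 + y^2) ^ (n-1) * (1 + y^2)) := by ring
      _ = 2 * (1 + y^2) ^ n := by rw [← pow_succ, Nat.sub_add_cancel hn1]
  calc y ^ (n-1) * (1 + y) ≤ Real.sqrt ((y ^ (n-1) * (1+y))^2) := by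
        rw [Real.sqrt_sq (by positivity)]
    _ ≤ Real.sqrt (2 * (1 + y ^ 2) ^ n) := Real.sqrt_le_sqrt key
    _ = Real.sqrt 2 * (1 + y ^ 2) ^ (3*s) := by
        rw [Real.sqrt_mul (by norm_num), hsqrt]

-- pointwise bound on the tail region
lemma tail_pointwise {n : ℕ} {B C R y : ℝ} (hB : 0 < B) (hn1 : 1 ≤ n) (hR : 0 < R)
    (hy : 1 < y) :
    y ^ (n-1) * ((1 + y ^ 2) ^ B * R ^ C)⁻¹ ≤ R ^ (-C) * y ^ ((n:ℝ) - 1 - 2*B) := by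
  have hy0 : (0:ℝ) < y := lt_trans one_pos hy
  have h1 : y ^ ((2:ℝ) * B) ≤ (1 + y ^ 2) ^ B := by
    have : (y:ℝ) ^ (2:ℕ) ≤ 1 + y ^ 2 := by nlinarith
    calc y ^ ((2:ℝ) * B) = (y ^ (2:ℕ)) ^ B := by
          rw [← Real.rpow_natCast y 2, ← Real.rpow_mul hy0.le]; norm_num
      _ ≤ (1 + y ^ 2) ^ B := Real.rpow_le_rpow (by positivity) this hB.le
  have e1 : (y:ℝ) ^ (n-1) = y ^ ((n:ℝ) - 1) := by
    rw [← Real.rpow_natCast y (n-1), Nat.cast_sub hn1, Nat.cast_one]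
  rw [mul_inv, Real.rpow_neg hR.le, e1]
  rw [mul_comm ((1 + y^2)^B)⁻¹ (R^C)⁻¹, ← mul_assoc]
  rw [mul_comm (y ^ ((n:ℝ)-1)) ((R^C)⁻¹), mul_assoc]
  gcongr (R^C)⁻¹ * ?_
  calc y ^ ((n:ℝ)-1) * ((1 + y ^ 2) ^ B)⁻¹ ≤ y ^ ((n:ℝ)-1) * (y ^ ((2:ℝ)*B))⁻¹ := by
        have := inv_anti₀ (Real.rpow_pos_of_pos hy0 ((2:ℝ)*B)) h1
        exact mul_le_mul_of_nonneg_left this (Real.rpow_nonneg hy0.le _)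
    _ = y ^ ((n:ℝ) - 1 - 2*B) := by
        rw [← Real.rpow_neg hy0.le, ← Real.rpow_add hy0]
        congr 1

lemma prof_integrable {n : ℕ} {s : ℝ} (hs : 0 < s) (hn : (n:ℝ) = 6 * s)
    {B C A R : ℝ} (hB : 3 * s < B) (hR : 1 < R) :
    Integrable (fun z : E n => prof s B C A R ‖z‖) := by
  have hR0 : (0:ℝ) < R := lt_trans one_pos hR
  have hB0 : 0 < B := by linarith
  have hmeas : AEStronglyMeasurable (fun z : E n => prof s B C A R ‖z‖) volume :=
    ((prof_measurable s B C A R hR0).comp measurable_norm).aestronglyMeasurable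
  set M : E n → ℝ := fun z =>
    (Metric.closedBall (0:E n) (R^2)).indicator (fun _ => R ^ (-A)) z
      + R ^ (-C) * (2 ^ B * (1 + ‖z‖) ^ (-(2*B))) with hM_def
  have hfin : (Module.finrank ℝ (E n) : ℝ) < 2 * B := by
    rw [finrank_euclideanSpace_fin, hn]; linarith
  have hM : Integrable M := by
    apply Integrable.add
    · exact (integrable_indicator_iff measurableSet_closedBall).2
        (integrableOn_const measure_closedBall_lt_top.ne)
    · exact ((integrable_one_add_norm hfin).const_mul _).const_mul _
  refine hM.mono' hmeas (Filter.Eventually.of_forall fun z => ?_)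
  rw [Real.norm_eq_abs, abs_of_nonneg (prof_nonneg hR0)]
  by_cases h : ‖z‖ ≤ R ^ 2
  · have h1 : prof s B C A R ‖z‖ = ((1 + ‖z‖ ^ 2) ^ (3*s) * R ^ A)⁻¹ := by
      simp [prof, h]
    have h2 : (Metric.closedBall (0:E n) (R^2)).indicator (fun _ => R ^ (-A)) z = R ^ (-A) := by
      rw [Set.indicator_of_mem]
      simpa [Metric.mem_closedBall, dist_zero_right] using h
    rw [h1, hM_def]
    simp only [h2]
    have := prof_core_le (r := ‖z‖) (A := A) hs.le hR0
    have hpos : 0 ≤ R ^ (-C) * (2 ^ B * (1 + ‖z‖) ^ (-(2*B))) := by positivity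
    linarith
  · have h1 : prof s B C A R ‖z‖ = ((1 + ‖z‖ ^ 2) ^ B * R ^ C)⁻¹ := by
      simp [prof, h]
    rw [h1, hM_def]
    have := prof_tail_le (r := ‖z‖) (C := C) hB0.le hR0 (norm_nonneg z)
    have hpos : 0 ≤ (Metric.closedBall (0:E n) (R^2)).indicator (fun _ => R ^ (-A)) z :=
      Set.indicator_nonneg (fun _ _ => by positivity) z
    simp only []
    linarith

lemma prof_integral_bound {n : ℕ} {s : ℝ} (hs : 0 < s) (hn : (n:ℝ) = 6 * s)
    {B C A : ℝ} (hB : 3 * s < B) (hA : A = C + 4 * B - 12 * s) :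
    ∃ K : ℝ, 0 < K ∧ ∀ R : ℝ, 3 ≤ R →
      ∫ z : E n, prof s B C A R ‖z‖ ≤ K * R ^ (-A) * Real.log R := by
  have hn0 : 0 < n := Nat.cast_pos.mp (show (0:ℝ) < n by rw [hn]; positivity)
  have hn1 : 1 ≤ n := hn0
  have hB0 : 0 < B := by linarith
  haveI : Nonempty (Fin n) := Fin.pos_iff_nonempty.mp hn0
  haveI : Nontrivial (E n) := inferInstance
  set v : ℝ := (volume (Metric.ball (0:E n) 1)).toReal with hv_def
  have hv : 0 < v :=
    ENNReal.toReal_pos (Metric.measure_ball_pos volume (0:E n) one_pos).ne' measure_ball_lt_top.ne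
  have h2Bn : 0 < 2*B - (n:ℝ) := by rw [hn]; linarith
  refine ⟨(n:ℝ) * v * (3 * Real.sqrt 2 + 1/(2*B - (n:ℝ))), by positivity, fun R hR => ?_⟩
  have hR0 : (0:ℝ) < R := by linarith
  have hR1 : (1:ℝ) < R := by linarith
  have hρ : (0:ℝ) < R^2 := by positivity
  have hlogR : 1 ≤ Real.log R := by
    rw [Real.le_log_iff_exp_le hR0]
    calc Real.exp 1 ≤ 2.7182818286 := Real.exp_one_lt_d9.le
      _ ≤ R := by linarith
  have hexp : (n:ℝ) - 1 - 2*B < -1 := by linarith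
  -- polar coordinates
  rw [integral_fun_norm_addHaar volume (prof s B C A R)]
  simp only [finrank_euclideanSpace_fin, nsmul_eq_mul, smul_eq_mul, ← hv_def]
  set g : ℝ → ℝ := fun y => y ^ (n-1) * prof s B C A R y with hg_def
  -- integrability on the two pieces
  have hcont : Continuous (fun y : ℝ => y ^ (n-1) * ((1+y^2)^(3*s) * R^A)⁻¹) :=
    (continuous_pow _).mul ((((continuous_const.add (continuous_pow 2)).rpow_const
      fun y => Or.inl (by
        have : (0:ℝ) < 1 + y ^ 2 := by positivity
        exact this.ne')).mul continuous_const).inv₀ fun y => by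
      have : (0:ℝ) < (1 + y ^ 2) ^ (3*s) * R ^ A := by positivity
      exact this.ne')
  have hIoc : IntegrableOn (fun y : ℝ => y ^ (n-1) * ((1+y^2)^(3*s) * R^A)⁻¹)
      (Set.Ioc 0 (R^2)) := hcont.integrableOn_Ioc
  have hEq1 : Set.EqOn (fun y : ℝ => y ^ (n-1) * ((1+y^2)^(3*s) * R^A)⁻¹) g
      (Set.Ioc 0 (R^2)) := fun y hy => by simp [hg_def, prof, hy.2]
  have hgIoc : IntegrableOn g (Set.Ioc 0 (R^2)) := hIoc.congr_fun hEq1 measurableSet_Ioc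
  have hint2 : IntegrableOn (fun y : ℝ => R^(-C) * y^((n:ℝ)-1-2*B)) (Set.Ioi (R^2)) :=
    (integrableOn_Ioi_rpow_of_lt hexp hρ).const_mul _
  have hmeasg : Measurable g := (measurable_id.pow_const _).mul (prof_measurable s B C A R hR0)
  have hgtail : ∀ y ∈ Set.Ioi (R^2), g y = y ^ (n-1) * ((1+y^2)^B * R^C)⁻¹ := by
    intro y hy
    have : ¬ (y ≤ R^2) := not_le.2 hy
    simp [hg_def, prof, this]
  have hgtail_le : ∀ y ∈ Set.Ioi (R^2), g y ≤ R^(-C) * y^((n:ℝ)-1-2*B) := by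
    intro y hy
    have hy1 : 1 < y := lt_trans (by nlinarith : (1:ℝ) < R^2) hy
    rw [hgtail y hy]
    exact tail_pointwise hB0 hn1 hR0 hy1
  have hgIoi : IntegrableOn g (Set.Ioi (R^2)) := by
    refine Integrable.mono' hint2 hmeasg.aestronglyMeasurable ?_
    rw [ae_restrict_iff' measurableSet_Ioi]
    refine Filter.Eventually.of_forall fun y hy => ?_
    rw [Real.norm_eq_abs, abs_of_nonneg]
    · exact hgtail_le y hy
    · have hy0 : (0:ℝ) < y := lt_trans hρ hy
      exact mul_nonneg (by positivity) (prof_nonneg hR0)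
  have hsplit : ∫ y in Set.Ioi (0:ℝ), g y
      = (∫ y in Set.Ioc 0 (R^2), g y) + ∫ y in Set.Ioi (R^2), g y := by
    rw [← setIntegral_union (Set.Ioc_disjoint_Ioi le_rfl) measurableSet_Ioi hgIoc hgIoi,
      Set.Ioc_union_Ioi_eq_Ioi hρ.le]
  -- core piece bound
  have hmaj1 : IntegrableOn (fun y : ℝ => R^(-A) * (Real.sqrt 2 * (1+y)⁻¹))
      (Set.Ioc 0 (R^2)) := by
    have hco : ContinuousOn (fun y : ℝ => R^(-A) * (Real.sqrt 2 * (1+y)⁻¹))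
        (Set.Icc 0 (R^2)) := by
      apply ContinuousOn.mul continuousOn_const
      apply ContinuousOn.mul continuousOn_const
      exact ContinuousOn.inv₀ (continuous_const.add continuous_id).continuousOn
        fun y hy => by have := hy.1; positivity
    exact (hco.integrableOn_Icc).mono_set Set.Ioc_subset_Icc_self
  have hI1 : ∫ y in Set.Ioc 0 (R^2), g y ≤ R^(-A) * (3 * Real.sqrt 2) * Real.log R := by
    have step1 : ∫ y in Set.Ioc 0 (R^2), g y
        ≤ ∫ y in Set.Ioc 0 (R^2), R^(-A) * (Real.sqrt 2 * (1+y)⁻¹) := by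
      rw [setIntegral_congr_fun measurableSet_Ioc hEq1.symm]
      apply setIntegral_mono_on hIoc hmaj1 measurableSet_Ioc
      intro y hy
      have hy0 : 0 < y := hy.1
      have h0 : ((1+y^2)^(3*s) * R^A)⁻¹ = ((1+y^2)^(3*s))⁻¹ * (R^A)⁻¹ := mul_inv _ _
      calc y ^ (n-1) * ((1+y^2)^(3*s) * R^A)⁻¹
          = (y ^ (n-1) * ((1+y^2)^(3*s))⁻¹) * (R^A)⁻¹ := by rw [h0]; ring
        _ ≤ (Real.sqrt 2 * (1+y)⁻¹) * (R^A)⁻¹ := by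
            apply mul_le_mul_of_nonneg_right (core_pointwise hs hn hn1 hy0) (by positivity)
        _ = R^(-A) * (Real.sqrt 2 * (1+y)⁻¹) := by rw [Real.rpow_neg hR0.le]; ring
    have step2 : ∫ y in Set.Ioc (0:ℝ) (R^2), (1+y)⁻¹ = Real.log (1 + R^2) := by
      rw [← intervalIntegral.integral_of_le hρ.le]
      have h := intervalIntegral.integral_comp_add_left (a := (0:ℝ)) (b := R^2)
        (fun u : ℝ => u⁻¹) 1
      rw [h, show (1:ℝ)+0 = 1 by norm_num,
        integral_inv_of_pos one_pos (by positivity : (0:ℝ) < 1 + R^2)]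
      norm_num
    have step3 : Real.log (1 + R^2) ≤ 3 * Real.log R := by
      have h1 : (1:ℝ) + R^2 ≤ R^3 := by nlinarith
      calc Real.log (1 + R^2) ≤ Real.log (R^3) := Real.log_le_log (by positivity) h1
        _ = 3 * Real.log R := by rw [Real.log_pow]; norm_num
    calc ∫ y in Set.Ioc 0 (R^2), g y
        ≤ ∫ y in Set.Ioc 0 (R^2), R^(-A) * (Real.sqrt 2 * (1+y)⁻¹) := step1
      _ = R^(-A) * Real.sqrt 2 * Real.log (1 + R^2) := by
          rw [integral_const_mul]
          simp only [integral_const_mul, step2]; ring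
      _ ≤ R^(-A) * (3 * Real.sqrt 2) * Real.log R := by
          have h2 : R^(-A) * Real.sqrt 2 * Real.log (1 + R^2)
              ≤ R^(-A) * Real.sqrt 2 * (3 * Real.log R) :=
            mul_le_mul_of_nonneg_left step3 (by positivity)
          calc R^(-A) * Real.sqrt 2 * Real.log (1 + R^2)
              ≤ R^(-A) * Real.sqrt 2 * (3 * Real.log R) := h2
            _ = R^(-A) * (3 * Real.sqrt 2) * Real.log R := by ring
  -- tail piece bound
  have hI2 : ∫ y in Set.Ioi (R^2), g y ≤ R^(-A) * (1/(2*B - (n:ℝ))) * Real.log R := by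
    have step1 : ∫ y in Set.Ioi (R^2), g y
        ≤ ∫ y in Set.Ioi (R^2), R^(-C) * y^((n:ℝ)-1-2*B) :=
      setIntegral_mono_on hgIoi hint2 measurableSet_Ioi hgtail_le
    have step2 : ∫ y in Set.Ioi (R^2), R^(-C) * y^((n:ℝ)-1-2*B)
        = R^(-A) * (1/(2*B - (n:ℝ))) := by
      rw [integral_const_mul, integral_Ioi_rpow_of_lt hexp hρ]
      have e1 : ((R:ℝ)^(2:ℕ)) ^ ((n:ℝ)-1-2*B+1) = R ^ ((2:ℝ)*((n:ℝ)-2*B)) := by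
        rw [← Real.rpow_natCast R 2, ← Real.rpow_mul hR0.le]
        congr 1
        push_cast
        ring
      have e2 : R ^ ((2:ℝ)*((n:ℝ)-2*B)) = R^(-A) * R^(C:ℝ) := by
        rw [← Real.rpow_add hR0]
        congr 1
        rw [hA, hn]
        ring
      rw [e1, e2, show (n:ℝ)-1-2*B+1 = -(2*B-(n:ℝ)) from by ring, div_neg, neg_div, neg_neg,
        Real.rpow_neg hR0.le C]
      have hRC : (R:ℝ)^(C:ℝ) ≠ 0 := (Real.rpow_pos_of_pos hR0 C).ne'
      field_simp
    have step3 : R^(-A) * (1/(2*B - (n:ℝ))) ≤ R^(-A) * (1/(2*B - (n:ℝ))) * Real.log R :=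
      le_mul_of_one_le_right (by positivity) hlogR
    exact (step1.trans_eq step2).trans step3
  rw [hsplit]
  calc (n:ℝ) * (v * ((∫ y in Set.Ioc 0 (R^2), g y) + ∫ y in Set.Ioi (R^2), g y))
      ≤ (n:ℝ) * (v * ((R^(-A) * (3*Real.sqrt 2) * Real.log R)
          + (R^(-A) * (1/(2*B-(n:ℝ))) * Real.log R))) := by
        apply mul_le_mul_of_nonneg_left _ (by positivity : (0:ℝ) ≤ (n:ℝ))
        exact mul_le_mul_of_nonneg_left (add_le_add hI1 hI2) hv.le
    _ = (n:ℝ) * v * (3*Real.sqrt 2 + 1/(2*B-(n:ℝ))) * R^(-A) * Real.log R := by ring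

lemma bubble_piece {n : ℕ} {s : ℝ} (hs : 0 < s) (hn : (n:ℝ) = 6 * s)
    {B C A R : ℝ} (hB : 3 * s < B) (hR : 1 < R) (ξ : E n) {lam : ℝ} (hlam : 0 < lam) :
    Integrable (fun x : E n => lam ^ (6*s) * prof s B C A R (lam * ‖x - ξ‖)) ∧
      ∫ x : E n, lam ^ (6*s) * prof s B C A R (lam * ‖x - ξ‖)
        = ∫ z : E n, prof s B C A R ‖z‖ := by
  have hR0 : (0:ℝ) < R := lt_trans one_pos hR
  set H : E n → ℝ := fun z => prof s B C A R ‖z‖ with hH_def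
  have hkey : (fun x : E n => prof s B C A R (lam * ‖x - ξ‖))
      = fun x : E n => (fun x => H (lam • x)) (x - ξ) := by
    funext x
    simp [hH_def, norm_smul, abs_of_pos hlam]
  have hint : Integrable H := prof_integrable hs hn hB hR
  have hint1 : Integrable (fun x : E n => H (lam • x)) :=
    (integrable_comp_smul_iff volume H hlam.ne').2 hint
  have hint2 : Integrable (fun x : E n => prof s B C A R (lam * ‖x - ξ‖)) := by
    rw [hkey]
    exact hint1.comp_sub_right ξ
  have hlam_pow : (lam:ℝ) ^ Module.finrank ℝ (E n) = lam ^ ((6:ℝ)*s) := by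
    rw [finrank_euclideanSpace_fin, ← Real.rpow_natCast lam n, hn]
  refine ⟨hint2.const_mul _, ?_⟩
  rw [integral_const_mul, hkey, integral_sub_right_eq_self (fun x => H (lam • x)) ξ,
    Measure.integral_comp_smul_of_nonneg volume H lam (hR := hlam.le), smul_eq_mul, ← mul_assoc,
    hlam_pow, mul_inv_cancel₀ (by positivity), one_mul]

/-- `L³` and `L^{3/2}` bounds for the weights `S` and `T`
in the critical case `n = 6s`, `μ = 4s`, for large `𝓡`. -/
theorem weight_norm_estimates (n : ℕ) (s : ℝ) (hs : 0 < s) (hn6 : (n : ℝ) = 6 * s)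
    (κ : ℕ) (hκ : 0 < κ) :
    ∃ C : ℝ, 0 < C ∧ ∃ R0 : ℝ, 1 < R0 ∧
      ∀ R : ℝ, R0 ≤ R →
        ∀ (ξ : Fin κ → E n) (lam : Fin κ → ℝ), (∀ i, 0 < lam i) →
          (∫ x : E n, weightS n s κ ξ lam R x ^ (3 : ℝ)) ^ ((1 : ℝ) / 3)
              ≤ C * R ^ (-(4 * s)) * Real.log R ^ ((1 : ℝ) / 3) ∧
            (∫ x : E n, weightT n s κ ξ lam R x ^ ((3 : ℝ) / 2)) ^ ((2 : ℝ) / 3)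
              ≤ C * R ^ (-(4 * s)) * Real.log R ^ ((2 : ℝ) / 3) := by
  obtain ⟨K1, hK1, hK1b⟩ := prof_integral_bound (n := n) hs hn6
    (B := 9*s/2) (C := 6*s) (A := 12*s) (by linarith) (by ring)
  obtain ⟨K2, hK2, hK2b⟩ := prof_integral_bound (n := n) hs hn6
    (B := 15*s/4) (C := 3*s) (A := 6*s) (by linarith) (by ring)
  set CS : ℝ := ((κ:ℝ) ^ (3:ℝ) * (κ:ℝ) * K1) ^ ((1:ℝ)/3) with hCS_def
  set CT : ℝ := ((κ:ℝ) ^ ((3:ℝ)/2) * (κ:ℝ) * K2) ^ ((2:ℝ)/3) with hCT_def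
  have hκ0 : (0:ℝ) < (κ:ℝ) := Nat.cast_pos.mpr hκ
  have hCS : 0 < CS := Real.rpow_pos_of_pos (by positivity) _
  have hCT : 0 < CT := Real.rpow_pos_of_pos (by positivity) _
  refine ⟨max CS CT, lt_max_of_lt_left hCS, 3, by norm_num, fun R hR ξ lam hlam => ?_⟩
  have hR0 : (0:ℝ) < R := by linarith
  have hR1 : (1:ℝ) < R := by linarith
  have hlog : 0 ≤ Real.log R := Real.log_nonneg hR1.le
  -- the two profile parameter packs
  have hB1 : 3 * s < 9*s/2 := by linarith
  have hB2 : 3 * s < 15*s/4 := by linarith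
  -- pieces
  have hpiece1 := fun i => bubble_piece hs hn6 (B := 9*s/2) (C := 6*s) (A := 12*s)
    hB1 hR1 (ξ i) (hlam i)
  have hpiece2 := fun i => bubble_piece hs hn6 (B := 15*s/4) (C := 3*s) (A := 6*s)
    hB2 hR1 (ξ i) (hlam i)
  set I1 : ℝ := ∫ z : E n, prof s (9*s/2) (6*s) (12*s) R ‖z‖ with hI1_def
  set I2 : ℝ := ∫ z : E n, prof s (15*s/4) (3*s) (6*s) R ‖z‖ with hI2_def
  have hI1nn : 0 ≤ I1 := integral_nonneg fun z => prof_nonneg hR0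
  have hI2nn : 0 ≤ I2 := integral_nonneg fun z => prof_nonneg hR0
  constructor
  -- ============ S part ============
  · have hpt : ∀ x : E n, weightS n s κ ξ lam R x ^ (3:ℝ)
        ≤ (κ:ℝ) ^ (3:ℝ) * ∑ i, lam i ^ (6*s)
            * prof s (9*s/2) (6*s) (12*s) R (lam i * ‖x - ξ i‖) := by
      intro x
      have hnn : ∀ i : Fin κ, 0 ≤ (if lam i * ‖x - ξ i‖ ≤ R ^ 2 then
          lam i ^ (2 * s) / ((1 + (lam i * ‖x - ξ i‖) ^ 2) ^ s * R ^ (4 * s))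
        else lam i ^ (2 * s) / ((1 + (lam i * ‖x - ξ i‖) ^ 2) ^ (3 * s / 2) * R ^ (2 * s))) := by
        intro i
        have hli : 0 < lam i := hlam i
        have h0 : (0:ℝ) < 1 + (lam i * ‖x - ξ i‖) ^ 2 := by positivity
        split_ifs <;> positivity
      have h1 := sum_rpow_le_aux hκ _ hnn (p := (3:ℝ)) (by norm_num)
      have h2 : ∀ i : Fin κ, (if lam i * ‖x - ξ i‖ ≤ R ^ 2 then
          lam i ^ (2 * s) / ((1 + (lam i * ‖x - ξ i‖) ^ 2) ^ s * R ^ (4 * s))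
        else lam i ^ (2 * s) / ((1 + (lam i * ‖x - ξ i‖) ^ 2) ^ (3 * s / 2) * R ^ (2 * s)))
            ^ (3:ℝ)
          = lam i ^ (6*s) * prof s (9*s/2) (6*s) (12*s) R (lam i * ‖x - ξ i‖) := by
        intro i
        rw [apply_ite (fun t : ℝ => t ^ (3:ℝ))]
        unfold prof
        split_ifs with h
        · exact piece_eq (hlam i).le hR0 (by ring) (by ring) (by ring)
        · exact piece_eq (hlam i).le hR0 (by ring) (by ring) (by ring)
      calc weightS n s κ ξ lam R x ^ (3:ℝ)
          ≤ (κ:ℝ) ^ (3:ℝ) * ∑ i, (if lam i * ‖x - ξ i‖ ≤ R ^ 2 then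
              lam i ^ (2 * s) / ((1 + (lam i * ‖x - ξ i‖) ^ 2) ^ s * R ^ (4 * s))
            else lam i ^ (2 * s) / ((1 + (lam i * ‖x - ξ i‖) ^ 2) ^ (3 * s / 2) * R ^ (2 * s)))
              ^ (3:ℝ) := h1
        _ = (κ:ℝ) ^ (3:ℝ) * ∑ i, lam i ^ (6*s)
              * prof s (9*s/2) (6*s) (12*s) R (lam i * ‖x - ξ i‖) := by
            rw [Finset.sum_congr rfl fun i _ => h2 i]
    have hint : Integrable (fun x : E n => (κ:ℝ) ^ (3:ℝ) * ∑ i, lam i ^ (6*s)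
        * prof s (9*s/2) (6*s) (12*s) R (lam i * ‖x - ξ i‖)) :=
      (integrable_finset_sum _ fun i _ => (hpiece1 i).1).const_mul _
    have hmono : ∫ x : E n, weightS n s κ ξ lam R x ^ (3:ℝ)
        ≤ (κ:ℝ) ^ (3:ℝ) * ((κ:ℝ) * I1) := by
      calc ∫ x : E n, weightS n s κ ξ lam R x ^ (3:ℝ)
          ≤ ∫ x : E n, (κ:ℝ) ^ (3:ℝ) * ∑ i, lam i ^ (6*s)
              * prof s (9*s/2) (6*s) (12*s) R (lam i * ‖x - ξ i‖) := by
            apply integral_mono_of_nonneg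
            · exact Filter.Eventually.of_forall fun x => by
                have h0 : 0 ≤ weightS n s κ ξ lam R x := by
                  apply Finset.sum_nonneg
                  intro i _
                  have hli : 0 < lam i := hlam i
                  have h0 : (0:ℝ) < 1 + (lam i * ‖x - ξ i‖) ^ 2 := by positivity
                  split_ifs <;> positivity
                positivity
            · exact hint
            · exact Filter.Eventually.of_forall hpt
        _ = (κ:ℝ) ^ (3:ℝ) * ∑ i, ∫ x : E n, lam i ^ (6*s)
              * prof s (9*s/2) (6*s) (12*s) R (lam i * ‖x - ξ i‖) := by
            rw [integral_const_mul, integral_finset_sum _ fun i _ => (hpiece1 i).1]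
        _ = (κ:ℝ) ^ (3:ℝ) * ∑ _i : Fin κ, I1 := by
            rw [Finset.sum_congr rfl fun i _ => (hpiece1 i).2]
        _ = (κ:ℝ) ^ (3:ℝ) * ((κ:ℝ) * I1) := by
            rw [Finset.sum_const, Finset.card_univ, Fintype.card_fin, nsmul_eq_mul]
    have hIb : I1 ≤ K1 * R ^ (-(12*s)) * Real.log R := hK1b R hR
    have hfinal : ∫ x : E n, weightS n s κ ξ lam R x ^ (3:ℝ)
        ≤ ((κ:ℝ) ^ (3:ℝ) * (κ:ℝ) * K1) * R ^ (-(12*s)) * Real.log R := by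
      calc ∫ x : E n, weightS n s κ ξ lam R x ^ (3:ℝ)
          ≤ (κ:ℝ) ^ (3:ℝ) * ((κ:ℝ) * I1) := hmono
        _ ≤ (κ:ℝ) ^ (3:ℝ) * ((κ:ℝ) * (K1 * R ^ (-(12*s)) * Real.log R)) := by
            apply mul_le_mul_of_nonneg_left _ (by positivity)
            exact mul_le_mul_of_nonneg_left hIb hκ0.le
        _ = ((κ:ℝ) ^ (3:ℝ) * (κ:ℝ) * K1) * R ^ (-(12*s)) * Real.log R := by ring
    have hLHSnn : 0 ≤ ∫ x : E n, weightS n s κ ξ lam R x ^ (3:ℝ) := by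
      apply integral_nonneg
      intro x
      exact Real.rpow_nonneg (by
        apply Finset.sum_nonneg
        intro i _
        have hli : 0 < lam i := hlam i
        have h0 : (0:ℝ) < 1 + (lam i * ‖x - ξ i‖) ^ 2 := by positivity
        split_ifs <;> positivity) _
    calc (∫ x : E n, weightS n s κ ξ lam R x ^ (3:ℝ)) ^ ((1:ℝ)/3)
        ≤ (((κ:ℝ) ^ (3:ℝ) * (κ:ℝ) * K1) * R ^ (-(12*s)) * Real.log R) ^ ((1:ℝ)/3) :=
          Real.rpow_le_rpow hLHSnn hfinal (by norm_num)
      _ = CS * R ^ (-(4*s)) * Real.log R ^ ((1:ℝ)/3) := by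
          rw [Real.mul_rpow (by positivity) hlog,
            Real.mul_rpow (by positivity) (Real.rpow_nonneg hR0.le _),
            ← Real.rpow_mul hR0.le, show -(12*s) * ((1:ℝ)/3) = -(4*s) from by ring, hCS_def]
      _ ≤ max CS CT * R ^ (-(4*s)) * Real.log R ^ ((1:ℝ)/3) := by
          apply mul_le_mul_of_nonneg_right _ (Real.rpow_nonneg hlog _)
          exact mul_le_mul_of_nonneg_right (le_max_left _ _) (Real.rpow_nonneg hR0.le _)
  -- ============ T part ============
  · have hpt : ∀ x : E n, weightT n s κ ξ lam R x ^ ((3:ℝ)/2)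
        ≤ (κ:ℝ) ^ ((3:ℝ)/2) * ∑ i, lam i ^ (6*s)
            * prof s (15*s/4) (3*s) (6*s) R (lam i * ‖x - ξ i‖) := by
      intro x
      have hnn : ∀ i : Fin κ, 0 ≤ (if lam i * ‖x - ξ i‖ ≤ R ^ 2 then
          lam i ^ (4 * s) / ((1 + (lam i * ‖x - ξ i‖) ^ 2) ^ (2 * s) * R ^ (4 * s))
        else lam i ^ (4 * s) / ((1 + (lam i * ‖x - ξ i‖) ^ 2) ^ (5 * s / 2) * R ^ (2 * s))) := by
        intro i
        have hli : 0 < lam i := hlam i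
        have h0 : (0:ℝ) < 1 + (lam i * ‖x - ξ i‖) ^ 2 := by positivity
        split_ifs <;> positivity
      have h1 := sum_rpow_le_aux hκ _ hnn (p := (3:ℝ)/2) (by norm_num)
      have h2 : ∀ i : Fin κ, (if lam i * ‖x - ξ i‖ ≤ R ^ 2 then
          lam i ^ (4 * s) / ((1 + (lam i * ‖x - ξ i‖) ^ 2) ^ (2 * s) * R ^ (4 * s))
        else lam i ^ (4 * s) / ((1 + (lam i * ‖x - ξ i‖) ^ 2) ^ (5 * s / 2) * R ^ (2 * s)))
            ^ ((3:ℝ)/2)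
          = lam i ^ (6*s) * prof s (15*s/4) (3*s) (6*s) R (lam i * ‖x - ξ i‖) := by
        intro i
        rw [apply_ite (fun t : ℝ => t ^ ((3:ℝ)/2))]
        unfold prof
        split_ifs with h
        · exact piece_eq (hlam i).le hR0 (by ring) (by ring) (by ring)
        · exact piece_eq (hlam i).le hR0 (by ring) (by ring) (by ring)
      calc weightT n s κ ξ lam R x ^ ((3:ℝ)/2)
          ≤ (κ:ℝ) ^ ((3:ℝ)/2) * ∑ i, (if lam i * ‖x - ξ i‖ ≤ R ^ 2 then
              lam i ^ (4 * s) / ((1 + (lam i * ‖x - ξ i‖) ^ 2) ^ (2 * s) * R ^ (4 * s))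
            else lam i ^ (4 * s) / ((1 + (lam i * ‖x - ξ i‖) ^ 2) ^ (5 * s / 2) * R ^ (2 * s)))
              ^ ((3:ℝ)/2) := h1
        _ = (κ:ℝ) ^ ((3:ℝ)/2) * ∑ i, lam i ^ (6*s)
              * prof s (15*s/4) (3*s) (6*s) R (lam i * ‖x - ξ i‖) := by
            rw [Finset.sum_congr rfl fun i _ => h2 i]
    have hint : Integrable (fun x : E n => (κ:ℝ) ^ ((3:ℝ)/2) * ∑ i, lam i ^ (6*s)
        * prof s (15*s/4) (3*s) (6*s) R (lam i * ‖x - ξ i‖)) :=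
      (integrable_finset_sum _ fun i _ => (hpiece2 i).1).const_mul _
    have hmono : ∫ x : E n, weightT n s κ ξ lam R x ^ ((3:ℝ)/2)
        ≤ (κ:ℝ) ^ ((3:ℝ)/2) * ((κ:ℝ) * I2) := by
      calc ∫ x : E n, weightT n s κ ξ lam R x ^ ((3:ℝ)/2)
          ≤ ∫ x : E n, (κ:ℝ) ^ ((3:ℝ)/2) * ∑ i, lam i ^ (6*s)
              * prof s (15*s/4) (3*s) (6*s) R (lam i * ‖x - ξ i‖) := by
            apply integral_mono_of_nonneg
            · exact Filter.Eventually.of_forall fun x => by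
                have h0 : 0 ≤ weightT n s κ ξ lam R x := by
                  apply Finset.sum_nonneg
                  intro i _
                  have hli : 0 < lam i := hlam i
                  have h0 : (0:ℝ) < 1 + (lam i * ‖x - ξ i‖) ^ 2 := by positivity
                  split_ifs <;> positivity
                positivity
            · exact hint
            · exact Filter.Eventually.of_forall hpt
        _ = (κ:ℝ) ^ ((3:ℝ)/2) * ∑ i, ∫ x : E n, lam i ^ (6*s)
              * prof s (15*s/4) (3*s) (6*s) R (lam i * ‖x - ξ i‖) := by
            rw [integral_const_mul, integral_finset_sum _ fun i _ => (hpiece2 i).1]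
        _ = (κ:ℝ) ^ ((3:ℝ)/2) * ∑ _i : Fin κ, I2 := by
            rw [Finset.sum_congr rfl fun i _ => (hpiece2 i).2]
        _ = (κ:ℝ) ^ ((3:ℝ)/2) * ((κ:ℝ) * I2) := by
            rw [Finset.sum_const, Finset.card_univ, Fintype.card_fin, nsmul_eq_mul]
    have hIb : I2 ≤ K2 * R ^ (-(6*s)) * Real.log R := hK2b R hR
    have hfinal : ∫ x : E n, weightT n s κ ξ lam R x ^ ((3:ℝ)/2)
        ≤ ((κ:ℝ) ^ ((3:ℝ)/2) * (κ:ℝ) * K2) * R ^ (-(6*s)) * Real.log R := by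
      calc ∫ x : E n, weightT n s κ ξ lam R x ^ ((3:ℝ)/2)
          ≤ (κ:ℝ) ^ ((3:ℝ)/2) * ((κ:ℝ) * I2) := hmono
        _ ≤ (κ:ℝ) ^ ((3:ℝ)/2) * ((κ:ℝ) * (K2 * R ^ (-(6*s)) * Real.log R)) := by
            apply mul_le_mul_of_nonneg_left _ (by positivity)
            exact mul_le_mul_of_nonneg_left hIb hκ0.le
        _ = ((κ:ℝ) ^ ((3:ℝ)/2) * (κ:ℝ) * K2) * R ^ (-(6*s)) * Real.log R := by ring
    have hLHSnn : 0 ≤ ∫ x : E n, weightT n s κ ξ lam R x ^ ((3:ℝ)/2) := by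
      apply integral_nonneg
      intro x
      exact Real.rpow_nonneg (by
        apply Finset.sum_nonneg
        intro i _
        have hli : 0 < lam i := hlam i
        have h0 : (0:ℝ) < 1 + (lam i * ‖x - ξ i‖) ^ 2 := by positivity
        split_ifs <;> positivity) _
    calc (∫ x : E n, weightT n s κ ξ lam R x ^ ((3:ℝ)/2)) ^ ((2:ℝ)/3)
        ≤ (((κ:ℝ) ^ ((3:ℝ)/2) * (κ:ℝ) * K2) * R ^ (-(6*s)) * Real.log R) ^ ((2:ℝ)/3) :=
          Real.rpow_le_rpow hLHSnn hfinal (by norm_num)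
      _ = CT * R ^ (-(4*s)) * Real.log R ^ ((2:ℝ)/3) := by
          rw [Real.mul_rpow (by positivity) hlog,
            Real.mul_rpow (by positivity) (Real.rpow_nonneg hR0.le _),
            ← Real.rpow_mul hR0.le, show -(6*s) * ((2:ℝ)/3) = -(4*s) from by ring, hCT_def]
      _ ≤ max CS CT * R ^ (-(4*s)) * Real.log R ^ ((2:ℝ)/3) := by
          apply mul_le_mul_of_nonneg_right _ (Real.rpow_nonneg hlog _)
          exact mul_le_mul_of_nonneg_right (le_max_right _ _) (Real.rpow_nonneg hR0.le _)


end NonlocalSobolev
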